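/- (Accelerated iterates are closer to the fixed point, Remark (iii)) Let Z : ℝ^n → ℝ^n satisfy (A) Z(V) ⊆ V and (B) Z v ≥ v componentwise for all v ∈ V. Suppose v* ∈ ℝ^n satisfies T v* = v*. Let v^0 = w^0 ∈ V and define v^{k+1} = T v^k and w^{k+1} = Z(T w^k) for k ≥ 0. Then for every k ≥ 0: ‖v* − w^k‖_∞ ≤ ‖v* − v^k‖_∞, where ‖·‖_∞ denotes the max norm on ℝ^n. -/

import Mathlib

/-- The Markovian operator of the discounted MDP:
`(T v)(i) = min_{a ∈ A(i)} ( r(i,a) + α·Σ_j p(i,a,j)·v(j) )`. -/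
noncomputable def Tdisc {n : ℕ} (A : Fin n → Finset ℕ) (hA : ∀ i, (A i).Nonempty)
    (r : Fin n → ℕ → ℝ) (p : Fin n → ℕ → Fin n → ℝ) (disc : ℝ)
    (v : Fin n → ℝ) (i : Fin n) : ℝ :=
  (A i).inf' (hA i) (fun a => r i a + disc * ∑ j, p i a j * v j)

lemma Tdisc_mono {n : ℕ} (A : Fin n → Finset ℕ) (hA : ∀ i, (A i).Nonempty)
    (r : Fin n → ℕ → ℝ) (p : Fin n → ℕ → Fin n → ℝ) (disc : ℝ) (hdisc0 : 0 ≤ disc)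
    (hp0 : ∀ i, ∀ a ∈ A i, ∀ j, 0 ≤ p i a j)
    {u v : Fin n → ℝ} (huv : ∀ i, u i ≤ v i) :
    ∀ i, Tdisc A hA r p disc u i ≤ Tdisc A hA r p disc v i := by
  intro i
  apply Finset.le_inf'
  intro a ha
  refine le_trans (Finset.inf'_le _ ha) ?_
  gcongr
  · exact hp0 i a ha _
  · exact huv _

lemma le_vstar {n : ℕ} (hn : 1 ≤ n) (A : Fin n → Finset ℕ) (hA : ∀ i, (A i).Nonempty)
    (r : Fin n → ℕ → ℝ) (p : Fin n → ℕ → Fin n → ℝ) (disc : ℝ)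
    (hdisc0 : 0 ≤ disc) (hdisc1 : disc < 1)
    (hp0 : ∀ i, ∀ a ∈ A i, ∀ j, 0 ≤ p i a j)
    (hp1 : ∀ i, ∀ a ∈ A i, ∑ j, p i a j = 1)
    (vstar : Fin n → ℝ) (hfix : Tdisc A hA r p disc vstar = vstar)
    {v : Fin n → ℝ} (hv : ∀ i, v i ≤ Tdisc A hA r p disc v i) :
    ∀ i, v i ≤ vstar i := by
  have hne : (Finset.univ : Finset (Fin n)).Nonempty := by
    refine ⟨⟨0, hn⟩, Finset.mem_univ _⟩
  set M := Finset.univ.sup' hne (fun j => v j - vstar j) with hM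
  have hbound : ∀ i, v i - vstar i ≤ disc * M := by
    intro i
    have h1 : v i ≤ Tdisc A hA r p disc v i := hv i
    have h2 : Tdisc A hA r p disc v i ≤ Tdisc A hA r p disc vstar i + disc * M := by
      obtain ⟨a, ha, hmin⟩ := Finset.exists_mem_eq_inf' (hA i)
        (fun a => r i a + disc * ∑ j, p i a j * vstar j)
      have h3 : Tdisc A hA r p disc vstar i = r i a + disc * ∑ j, p i a j * vstar j := hmin
      have h5 : Tdisc A hA r p disc v i ≤ r i a + disc * ∑ j, p i a j * v j :=
        Finset.inf'_le _ ha
      have h4 : ∑ j, p i a j * v j ≤ ∑ j, p i a j * vstar j + M := by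
        have : ∑ j, p i a j * v j ≤ ∑ j, p i a j * (vstar j + M) := by
          apply Finset.sum_le_sum
          intro j _
          have hMj : v j - vstar j ≤ M := by
            rw [hM]; exact Finset.le_sup' (fun j => v j - vstar j) (Finset.mem_univ j)
          have := hp0 i a ha j
          nlinarith
        calc ∑ j, p i a j * v j ≤ ∑ j, p i a j * (vstar j + M) := this
          _ = ∑ j, p i a j * vstar j + (∑ j, p i a j) * M := by
              rw [Finset.sum_mul]; rw [← Finset.sum_add_distrib]; exact Finset.sum_congr rfl (fun j _ => by ring)
          _ = ∑ j, p i a j * vstar j + M := by rw [hp1 i a ha]; ring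
      nlinarith
    rw [hfix] at h2
    linarith
  have hMle : M ≤ disc * M := by
    rw [hM]
    apply Finset.sup'_le
    intro j _
    exact hbound j
  have hM0 : M ≤ 0 := by nlinarith
  intro i
  have : v i - vstar i ≤ M := by
    rw [hM]; exact Finset.le_sup' (fun j => v j - vstar j) (Finset.mem_univ i)
  linarith

/-- Accelerated iterates are closer to the fixed point in the max norm
(Remark, part (iii)): under the Acceleration Conditions, for every `k`,
`‖v* − w^k‖_∞ ≤ ‖v* − v^k‖_∞` (the norm on `Fin n → ℝ` is the sup/max norm). -/
theorem accelerated_VI_closer (n : ℕ) (hn : 1 ≤ n)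
    (disc : ℝ) (hdisc0 : 0 ≤ disc) (hdisc1 : disc < 1)
    (A : Fin n → Finset ℕ) (hA : ∀ i, (A i).Nonempty)
    (r : Fin n → ℕ → ℝ) (p : Fin n → ℕ → Fin n → ℝ)
    (hp0 : ∀ i, ∀ a ∈ A i, ∀ j, 0 ≤ p i a j)
    (hp1 : ∀ i, ∀ a ∈ A i, ∑ j, p i a j = 1)
    (Z : (Fin n → ℝ) → (Fin n → ℝ))
    (hZA : ∀ v : Fin n → ℝ, (∀ i, v i ≤ Tdisc A hA r p disc v i) →
      ∀ i, Z v i ≤ Tdisc A hA r p disc (Z v) i)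
    (hZB : ∀ v : Fin n → ℝ, (∀ i, v i ≤ Tdisc A hA r p disc v i) →
      ∀ i, v i ≤ Z v i)
    (vstar : Fin n → ℝ) (hfix : Tdisc A hA r p disc vstar = vstar)
    (v w : ℕ → Fin n → ℝ)
    (h0 : v 0 = w 0) (h0V : ∀ i, v 0 i ≤ Tdisc A hA r p disc (v 0) i)
    (hv : ∀ k, v (k + 1) = Tdisc A hA r p disc (v k))
    (hw : ∀ k, w (k + 1) = Z (Tdisc A hA r p disc (w k))) :
    ∀ k, ‖vstar - w k‖ ≤ ‖vstar - v k‖ := by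
  -- w k ∈ V and v k ≤ w k by induction
  have key : ∀ k, (∀ i, w k i ≤ Tdisc A hA r p disc (w k) i) ∧ (∀ i, v k i ≤ w k i) := by
    intro k
    induction k with
    | zero => exact ⟨h0 ▸ h0V, fun i => (h0 ▸ le_refl (v 0 i))⟩
    | succ k ih =>
      obtain ⟨hwV, hvw⟩ := ih
      have hTwV : ∀ i, Tdisc A hA r p disc (w k) i ≤
          Tdisc A hA r p disc (Tdisc A hA r p disc (w k)) i :=
        Tdisc_mono A hA r p disc hdisc0 hp0 hwV
      constructor
      · rw [hw k]; exact hZA _ hTwV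
      · intro i
        rw [hv k, hw k]
        calc Tdisc A hA r p disc (v k) i ≤ Tdisc A hA r p disc (w k) i :=
              Tdisc_mono A hA r p disc hdisc0 hp0 hvw i
          _ ≤ Z (Tdisc A hA r p disc (w k)) i := hZB _ hTwV i
  have hvV : ∀ k, ∀ i, v k i ≤ Tdisc A hA r p disc (v k) i := by
    intro k
    induction k with
    | zero => exact h0V
    | succ k ih =>
      rw [hv k]
      exact Tdisc_mono A hA r p disc hdisc0 hp0 ih
  intro k
  obtain ⟨hwV, hvw⟩ := key k
  have hwle : ∀ i, w k i ≤ vstar i :=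
    le_vstar hn A hA r p disc hdisc0 hdisc1 hp0 hp1 vstar hfix hwV
  have hvle : ∀ i, v k i ≤ vstar i :=
    le_vstar hn A hA r p disc hdisc0 hdisc1 hp0 hp1 vstar hfix (hvV k)
  rw [pi_norm_le_iff_of_nonneg (norm_nonneg _)]
  intro i
  have h1 : ‖(vstar - w k) i‖ ≤ ‖(vstar - v k) i‖ := by
    simp only [Pi.sub_apply, Real.norm_eq_abs]
    rw [abs_of_nonneg (by linarith [hwle i]), abs_of_nonneg (by linarith [hvle i])]
    linarith [hvw i]
  exact h1.trans (norm_le_pi_norm _ i)
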